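/- arXiv:1708.07828 — 3 statements merged into one kernel-verified Lean document; each statement's English description precedes it below -/
import Mathlib

section
/- Let q be a prime power, t ≥ 2 an integer, α a primitive element of F_{q^t}, w = (q^t-1)/(q-1), and τ an integer with τ not ≡ 0 (mod w). For (a,b) ∈ F_q × F_q let N(a,b) be the number of i ∈ [0, q^t - 2] with (Tr_{q^t/q}(α^i), Tr_{q^t/q}(α^{i+τ})) = (a,b). Then N(a,b) = q^{t-2} if (a,b) ≠ (0,0), and N(0,0) = q^{t-2} - 1. -/
open Finset in
private lemma aux_count_fiber {K β : Type*} [AddCommGroup K] [Fintype K] [Fintype β]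
    [AddCommGroup β] [DecidableEq K] [DecidableEq β]
    (P : K → β) (hadd : ∀ x y : K, P (x - y) = P x - P y) (hsurj : Function.Surjective P)
    (y : β) :
    (Finset.univ.filter fun x : K => P x = y).card * Fintype.card β = Fintype.card K := by
  have hall : ∀ y' : β, (univ.filter fun x : K => P x = y').card
      = (univ.filter fun x : K => P x = y).card := by
    intro y'
    obtain ⟨d, hd⟩ := hsurj (y' - y)
    refine Finset.card_nbij' (fun x => x - d) (fun x => x + d) ?_ ?_ ?_ ?_
    · intro x hx
      simp only [mem_coe, mem_filter, mem_univ, true_and] at hx ⊢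
      rw [hadd, hx, hd]
      abel
    · intro x hx
      simp only [mem_coe, mem_filter, mem_univ, true_and] at hx ⊢
      have h2 := hadd (x + d) d
      rw [add_sub_cancel_right, hx, hd] at h2
      rw [eq_sub_iff_add_eq] at h2
      rw [← h2]
      abel
    · intro x _; simp
    · intro x _; simp
  have hsum := Finset.card_eq_sum_card_fiberwise
    (s := (univ : Finset K)) (t := (univ : Finset β)) (f := P) (fun x _ => mem_univ _)
  rw [Finset.card_univ] at hsum
  have h2 : ∑ y' : β, (univ.filter fun x : K => P x = y').card
      = Fintype.card β * (univ.filter fun x : K => P x = y).card := by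
    rw [Finset.sum_congr rfl fun y' _ => hall y', Finset.sum_const, smul_eq_mul,
      Finset.card_univ]
  rw [hsum, h2, Nat.mul_comm]

theorem stmt_9 {F K : Type*} [Field F] [Field K] [Fintype F] [Fintype K] [Algebra F K]
    [DecidableEq F]
    (q t : ℕ) (hq : IsPrimePow q) (ht : 2 ≤ t)
    (hF : Fintype.card F = q) (hK : Fintype.card K = q ^ t)
    (α : K) (hα : orderOf α = q ^ t - 1)
    (τ : ℤ) (hτ : ¬ (((q ^ t - 1) / (q - 1) : ℕ) : ℤ) ∣ τ) :
    (∀ a b : F, (a, b) ≠ (0, 0) →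
      ((Finset.range (q ^ t - 1)).filter fun i : ℕ =>
          Algebra.trace F K (α ^ ((i : ℕ) : ℤ)) = a ∧
          Algebra.trace F K (α ^ (((i : ℕ) : ℤ) + τ)) = b).card = q ^ (t - 2)) ∧
    ((Finset.range (q ^ t - 1)).filter fun i : ℕ =>
        Algebra.trace F K (α ^ ((i : ℕ) : ℤ)) = (0 : F) ∧
        Algebra.trace F K (α ^ (((i : ℕ) : ℤ) + τ)) = (0 : F)).card = q ^ (t - 2) - 1 := by
  classical
  have hq2 : 2 ≤ q := hq.two_le
  have hqt : 4 ≤ q ^ t := by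
    calc (4 : ℕ) = 2 ^ 2 := rfl
    _ ≤ q ^ 2 := Nat.pow_le_pow_left hq2 2
    _ ≤ q ^ t := Nat.pow_le_pow_right (by omega) ht
  have ht0 : 0 < q ^ t - 1 := by omega
  have hα1 : α ^ (q ^ t - 1) = 1 := by rw [← hα]; exact pow_orderOf_eq_one α
  have hα0 : α ≠ 0 := by
    intro h
    rw [h, zero_pow (by omega)] at hα1
    exact one_ne_zero hα1.symm
  set u : Kˣ := Units.mk0 α hα0 with hu_def
  have huval : (u : K) = α := rfl
  have hu : orderOf u = q ^ t - 1 := by rw [← orderOf_units, huval]; exact hα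
  set c : K := α ^ τ with hc_def
  have hc0 : c ≠ 0 := zpow_ne_zero _ hα0
  -- c is not in the base field
  have hdvd : (q - 1) ∣ (q ^ t - 1) := by
    simpa using Nat.sub_dvd_pow_sub_pow q 1 t
  have hw : ((q ^ t - 1) / (q - 1)) * (q - 1) = q ^ t - 1 := Nat.div_mul_cancel hdvd
  have hcF : c ∉ Set.range (algebraMap F K) := by
    rintro ⟨e, he⟩
    have he0 : e ≠ 0 := by
      rintro rfl
      rw [map_zero] at he
      exact hc0 he.symm
    have h1 : e ^ (q - 1) = 1 := by
      have := FiniteField.pow_card_sub_one_eq_one e he0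
      rwa [hF] at this
    have h2 : c ^ (q - 1) = 1 := by rw [← he, ← map_pow, h1, map_one]
    have h3 : u ^ (τ * ((q - 1 : ℕ) : ℤ)) = 1 := by
      apply Units.ext
      rw [Units.val_one, zpow_mul, zpow_natCast, Units.val_pow_eq_pow_val]
      have hcu : ((u ^ τ : Kˣ) : K) = c := by
        rw [hc_def]
        exact (Units.val_zpow_eq_zpow_val u τ) ▸ rfl
      rw [hcu, h2]
    have h4 : ((q ^ t - 1 : ℕ) : ℤ) ∣ τ * ((q - 1 : ℕ) : ℤ) := by
      rw [← hu]
      exact orderOf_dvd_iff_zpow_eq_one.mpr h3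
    rw [← hw] at h4
    push_cast at h4
    obtain ⟨k, hk⟩ := h4
    apply hτ
    refine ⟨k, ?_⟩
    have hq1 : ((q - 1 : ℕ) : ℤ) ≠ 0 := Nat.cast_ne_zero.mpr (by omega)
    have heq2 : τ * ((q - 1 : ℕ) : ℤ)
        = (((q ^ t - 1) / (q - 1) : ℕ) : ℤ) * k * ((q - 1 : ℕ) : ℤ) := by
      rw [hk]; push_cast; ring
    exact mul_right_cancel₀ hq1 heq2
  -- trace facts
  have htrS : Function.Surjective (Algebra.trace F K) := Algebra.trace_surjective F K
  have hker0 : ∀ d : K, d ≠ 0 → ∃ x, Algebra.trace F K (d * x) ≠ 0 := by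
    intro d hd
    obtain ⟨y, hy⟩ := htrS 1
    refine ⟨d⁻¹ * y, ?_⟩
    rw [← mul_assoc, mul_inv_cancel₀ hd, one_mul, hy]
    exact one_ne_zero
  set P : K → F × F := fun x => (Algebra.trace F K x, Algebra.trace F K (c * x)) with hP_def
  have hPsub : ∀ x y : K, P (x - y) = P x - P y := by
    intro x y
    simp [hP_def, mul_sub, map_sub, Prod.ext_iff]
  -- exists z with trace 0 but Tr (c z) ≠ 0
  have hkey : ∃ z, Algebra.trace F K z = 0 ∧ Algebra.trace F K (c * z) ≠ 0 := by
    by_contra h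
    push_neg at h
    obtain ⟨x0, hx0⟩ := htrS 1
    set lam := Algebra.trace F K (c * x0) with hlam
    have hlin : ∀ x : K, Algebra.trace F K (c * x) = Algebra.trace F K x * lam := by
      intro x
      have h0 : Algebra.trace F K (x - Algebra.trace F K x • x0) = 0 := by
        rw [map_sub, map_smul, hx0, smul_eq_mul, mul_one, sub_self]
      have h1 := h _ h0
      rw [mul_sub, mul_smul_comm, map_sub, map_smul, smul_eq_mul, sub_eq_zero] at h1
      rw [h1, hlam]
    have hzero : ∀ x, Algebra.trace F K ((c - algebraMap F K lam) * x) = 0 := by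
      intro x
      rw [sub_mul, map_sub, hlin, ← Algebra.smul_def, map_smul, smul_eq_mul, mul_comm, sub_self]
    have hd : c - algebraMap F K lam = 0 := by
      by_contra hd
      obtain ⟨x, hx⟩ := hker0 _ hd
      exact hx (hzero x)
    exact hcF ⟨lam, (sub_eq_zero.mp hd).symm⟩
  -- P is surjective
  have hPsurj : Function.Surjective P := by
    obtain ⟨z, hz0, hzc⟩ := hkey
    obtain ⟨x0, hx0⟩ := htrS 1
    rintro ⟨a, b⟩
    refine ⟨a • x0 + ((b - a * Algebra.trace F K (c * x0)) / Algebra.trace F K (c * z)) • z, ?_⟩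
    have h1 : Algebra.trace F K (a • x0 + ((b - a * Algebra.trace F K (c * x0)) /
        Algebra.trace F K (c * z)) • z) = a := by
      rw [map_add, map_smul, map_smul, hx0, hz0, smul_eq_mul, smul_eq_mul, mul_one, mul_zero,
        add_zero]
    have h2 : Algebra.trace F K (c * (a • x0 + ((b - a * Algebra.trace F K (c * x0)) /
        Algebra.trace F K (c * z)) • z)) = b := by
      rw [mul_add, mul_smul_comm, mul_smul_comm, map_add, map_smul, map_smul,
        smul_eq_mul, smul_eq_mul]
      field_simp
      ring
    simp [hP_def, h1, h2]
  -- count fibers of P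
  have hNy : ∀ y : F × F, (Finset.univ.filter fun x : K => P x = y).card = q ^ (t - 2) := by
    intro y
    have hcnt := aux_count_fiber P hPsub hPsurj y
    rw [hK, Fintype.card_prod, hF] at hcnt
    have hqq : q * q = q ^ 2 := by ring
    have hpow : q ^ (t - 2) * q ^ 2 = q ^ t := by
      rw [← pow_add]
      congr 1
      omega
    have hq2pos : 0 < q ^ 2 := by positivity
    apply Nat.eq_of_mul_eq_mul_right hq2pos
    rw [hpow, ← hcnt, hqq]
  -- every nonzero element is a power of α with small exponent
  have htop : ∀ x : Kˣ, ∃ k : ℕ, k < q ^ t - 1 ∧ α ^ k = (x : K) := by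
    intro x
    have h1 : Nat.card (Subgroup.zpowers u) = Nat.card Kˣ := by
      rw [Nat.card_zpowers, hu, Nat.card_eq_fintype_card, Fintype.card_units, hK]
    have h2 : x ∈ Subgroup.zpowers u := by
      rw [Subgroup.eq_top_of_card_eq _ h1]
      trivial
    obtain ⟨k, hk⟩ := (Submonoid.mem_powers_iff x u).mp (mem_powers_iff_mem_zpowers.mpr h2)
    refine ⟨k % (q ^ t - 1), Nat.mod_lt _ ht0, ?_⟩
    have h3 : u ^ (k % (q ^ t - 1)) = x := by rw [← hu, pow_mod_orderOf, hk]
    calc α ^ (k % (q ^ t - 1)) = ((u ^ (k % (q ^ t - 1)) : Kˣ) : K) := by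
          rw [Units.val_pow_eq_pow_val, huval]
    _ = (x : K) := by rw [h3]
  -- the key bijection
  have hbij : ∀ a b : F,
      ((Finset.range (q ^ t - 1)).filter fun i : ℕ =>
          Algebra.trace F K (α ^ ((i : ℕ) : ℤ)) = a ∧
          Algebra.trace F K (α ^ (((i : ℕ) : ℤ) + τ)) = b).card
      = (Finset.univ.filter fun x : K => x ≠ 0 ∧ P x = (a, b)).card := by
    intro a b
    apply Finset.card_nbij (fun i => α ^ i)
    · intro i hi
      simp only [Finset.mem_coe, Finset.mem_filter, Finset.mem_range] at hi
      obtain ⟨hi1, hTa, hTb⟩ := hi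
      rw [zpow_natCast] at hTa
      rw [zpow_add₀ hα0, zpow_natCast] at hTb
      simp only [Finset.mem_coe, Finset.mem_filter, Finset.mem_univ, true_and]
      refine ⟨pow_ne_zero _ hα0, ?_⟩
      simp only [hP_def, Prod.mk.injEq]
      exact ⟨hTa, by rw [mul_comm, ← hc_def] at hTb; exact hTb⟩
    · intro i hi j hj hij
      simp only [Finset.coe_filter, Set.mem_setOf_eq, Finset.mem_range] at hi hj
      have hui : u ^ i = u ^ j := by
        apply Units.ext
        rw [Units.val_pow_eq_pow_val, Units.val_pow_eq_pow_val, huval]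
        exact hij
      exact pow_injOn_Iio_orderOf (by rw [hu]; exact Set.mem_Iio.mpr hi.1)
        (by rw [hu]; exact Set.mem_Iio.mpr hj.1) hui
    · intro x hx
      simp only [Finset.coe_filter, Set.mem_setOf_eq, Finset.mem_univ, true_and] at hx
      obtain ⟨hx0, hxP⟩ := hx
      obtain ⟨k, hk1, hk2⟩ := htop (Units.mk0 x hx0)
      rw [Units.val_mk0] at hk2
      have hxa : Algebra.trace F K x = a := by
        have := congrArg Prod.fst hxP
        simpa [hP_def] using this
      have hxb : Algebra.trace F K (c * x) = b := by
        have := congrArg Prod.snd hxP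
        simpa [hP_def] using this
      refine ⟨k, ?_, hk2⟩
      simp only [Finset.coe_filter, Set.mem_setOf_eq, Finset.mem_range]
      refine ⟨hk1, ?_, ?_⟩
      · rw [zpow_natCast, hk2]
        exact hxa
      · rw [zpow_add₀ hα0, zpow_natCast, hk2, mul_comm, ← hc_def]
        exact hxb
  constructor
  · intro a b hab
    rw [hbij a b]
    have heq : (Finset.univ.filter fun x : K => x ≠ 0 ∧ P x = (a, b))
        = Finset.univ.filter fun x : K => P x = (a, b) := by
      apply Finset.filter_congr
      intro x _
      constructor
      · rintro ⟨-, h⟩; exact h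
      · intro h
        refine ⟨?_, h⟩
        rintro rfl
        apply hab
        rw [← h]
        simp [hP_def]
    rw [heq, hNy]
  · rw [hbij 0 0]
    have h0mem : (0 : K) ∈ Finset.univ.filter fun x : K => P x = ((0 : F), (0 : F)) := by
      simp [hP_def]
    have heq : (Finset.univ.filter fun x : K => x ≠ 0 ∧ P x = ((0 : F), (0 : F)))
        = (Finset.univ.filter fun x : K => P x = ((0 : F), (0 : F))).erase 0 := by
      ext x
      simp only [Finset.mem_filter, Finset.mem_univ, true_and, Finset.mem_erase]
    rw [heq, Finset.card_erase_of_mem h0mem, hNy]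
end

section
/- Let p be a prime and q = p^e, t ≥ 2, and set w = (q^t - 1)/(q - 1). For every i ∈ Z coprime to w, the cyclotomic coset C_{p,w}^i = { i·p^r mod w : r ≥ 0 } has exactly te elements. -/
set_option maxHeartbeats 1000000

theorem stmt_11 (p e t q w : ℕ) (hp : p.Prime) (he : 0 < e) (ht : 2 ≤ t)
    (hq : q = p ^ e) (hw : w = (q ^ t - 1) / (q - 1))
    (i : ℕ) (hi : Nat.Coprime i w) :
    ({x : ℕ | ∃ r : ℕ, x = i * p ^ r % w} : Set ℕ).ncard = t * e := by
  have hp2 : 2 ≤ p := hp.two_le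
  have hq2 : 2 ≤ q := by
    rw [hq]
    calc 2 ≤ p := hp2
    _ ≤ p ^ e := Nat.le_self_pow he.ne' p
  -- geometric sum identity
  have hgeom : (q - 1) * ∑ j ∈ Finset.range t, q ^ j = q ^ t - 1 := by
    have h1 : 1 ≤ q ^ t := Nat.one_le_pow _ _ (by omega)
    have := geom_sum_mul (q : ℤ) t
    zify [h1, show 1 ≤ q by omega]
    linarith [this]
  have hwval : w = ∑ j ∈ Finset.range t, q ^ j := by
    rw [hw, ← hgeom, Nat.mul_div_cancel_left _ (by omega : 0 < q - 1)]
  have hwlb : q ^ (t - 1) + 1 ≤ w := by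
    rw [hwval]
    obtain ⟨s, hs⟩ : ∃ s, t = s + 1 := ⟨t - 1, by omega⟩
    subst hs
    rw [Finset.sum_range_succ]
    have h0 : 1 ≤ ∑ j ∈ Finset.range s, q ^ j := by
      have : s ≠ 0 := by omega
      calc 1 = q ^ 0 := rfl
      _ ≤ ∑ j ∈ Finset.range s, q ^ j :=
        Finset.single_le_sum (f := fun j => q ^ j) (fun _ _ => Nat.zero_le _)
          (Finset.mem_range.mpr (by omega))
    simpa using by omega
  have hw3 : 3 ≤ w := by
    have : 2 ≤ q ^ (t - 1) := le_trans hq2 (Nat.le_self_pow (by omega) q)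
    omega
  have : NeZero w := ⟨by omega⟩
  have hwdvd : w * (q - 1) = q ^ t - 1 := by rw [hwval, mul_comm]; exact hgeom
  have hqt1 : 1 ≤ q ^ t := Nat.one_le_pow _ _ (by omega)
  have hqt : q ^ t = w * (q - 1) + 1 := by omega
  have hpow : ((p : ZMod w)) ^ (t * e) = 1 := by
    have : ((p : ZMod w)) ^ (t * e) = ((q ^ t : ℕ) : ZMod w) := by
      rw [hq]; push_cast [← pow_mul, mul_comm e t]; ring
    rw [this, hqt]
    push_cast
    simp [ZMod.natCast_self]
  have hte : 0 < t * e := by positivity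
  have hfin : IsOfFinOrder ((p : ZMod w)) :=
    isOfFinOrder_iff_pow_eq_one.mpr ⟨t * e, hte, hpow⟩
  have hdvd : orderOf ((p : ZMod w)) ∣ t * e := orderOf_dvd_of_pow_eq_one hpow
  have hord : orderOf ((p : ZMod w)) = t * e := by
    by_contra hne
    set d := orderOf ((p : ZMod w)) with hd
    have hd1 : 0 < d := hfin.orderOf_pos
    obtain ⟨k, hk⟩ := hdvd
    have hk2 : 2 ≤ k := by
      rcases Nat.lt_or_ge k 2 with h | h
      · interval_cases k <;> omega
      · exact h
    have hdle : 2 * d ≤ t * e := by calc 2 * d = d * 2 := by ring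
                                    _ ≤ d * k := Nat.mul_le_mul_left d hk2
                                    _ = t * e := hk.symm
    have ht2 : t ≤ 2 * (t - 1) := by omega
    have hdle2 : d ≤ e * (t - 1) := by nlinarith
    have hwd : w ∣ p ^ d - 1 := by
      have h1 : ((p : ZMod w)) ^ d = 1 := pow_orderOf_eq_one _
      have h2 : ((p ^ d : ℕ) : ZMod w) = ((1 : ℕ) : ZMod w) := by push_cast; simpa using h1
      exact (Nat.modEq_iff_dvd' (Nat.one_le_pow _ _ (by omega))).mp
        ((ZMod.natCast_eq_natCast_iff _ _ _).mp h2).symm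
    have hmono : p ^ d ≤ p ^ (e * (t - 1)) := Nat.pow_le_pow_right (by omega) hdle2
    have hq' : q ^ (t - 1) = p ^ (e * (t - 1)) := by rw [hq, ← pow_mul]
    have hlt : p ^ d - 1 < w := by omega
    have hpos : 0 < p ^ d - 1 := by
      have : 2 ≤ p ^ d := le_trans hp2 (Nat.le_self_pow hd1.ne' p)
      omega
    exact absurd (Nat.le_of_dvd hpos hwd) (by omega)
  -- now the set computation
  have hiu : IsUnit ((i : ZMod w)) := (ZMod.isUnit_iff_coprime i w).mpr hi
  have hS : ({x : ℕ | ∃ r : ℕ, x = i * p ^ r % w} : Set ℕ) =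
      ZMod.val '' Set.range (fun r : ℕ => (i : ZMod w) * (p : ZMod w) ^ r) := by
    rw [← Set.range_comp]
    have hfun : ∀ r : ℕ, i * p ^ r % w = ZMod.val ((i : ZMod w) * (p : ZMod w) ^ r) := by
      intro r
      have : ((i : ZMod w) * (p : ZMod w) ^ r) = ((i * p ^ r : ℕ) : ZMod w) := by push_cast; ring
      rw [this, ZMod.val_natCast]
    ext x
    simp only [Set.mem_setOf_eq, Set.mem_range, Function.comp]
    constructor
    · rintro ⟨r, rfl⟩; exact ⟨r, (hfun r).symm⟩
    · rintro ⟨r, rfl⟩; exact ⟨r, (hfun r).symm⟩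
  rw [hS, Set.ncard_image_of_injective _ (ZMod.val_injective w)]
  have hrange : Set.range (fun r : ℕ => (i : ZMod w) * (p : ZMod w) ^ r) =
      (fun z => (i : ZMod w) * z) '' Set.range (fun r : ℕ => (p : ZMod w) ^ r) := by
    rw [← Set.range_comp]; rfl
  have hinj : Function.Injective (fun z : ZMod w => (i : ZMod w) * z) :=
    hiu.mul_right_injective
  rw [hrange, Set.ncard_image_of_injective _ hinj]
  have hpu : IsUnit ((p : ZMod w)) := IsUnit.of_pow_eq_one hpow hte.ne'
  have huv : ((hpu.unit : (ZMod w)ˣ) : ZMod w) = (p : ZMod w) := hpu.unit_spec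
  have hrange2 : Set.range (fun r : ℕ => (p : ZMod w) ^ r)
      = Units.val '' Set.range (fun r : ℕ => hpu.unit ^ r) := by
    rw [← Set.range_comp]
    exact congrArg Set.range (funext fun r => by simp [Function.comp, huv])
  rw [hrange2, Set.ncard_image_of_injective _ Units.val_injective]
  have hps : Set.range (fun r : ℕ => hpu.unit ^ r)
      = (Submonoid.powers hpu.unit : Set (ZMod w)ˣ) := (Submonoid.coe_powers _).symm
  rw [hps, ← Nat.card_coe_set_eq]
  have hordu : orderOf hpu.unit = t * e := by rw [← orderOf_units, huv, hord]
  exact Nat.card_submonoidPowers.trans hordu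
end

section
/- Let n be a positive integer and S a nonempty subset of [0, n-1]. Among all sets of the form S +_n i = {(s+i) mod n : s ∈ S}, i ∈ [0, n-1], there exists a unique set T with 0 ∈ T whose binary representation bin_n(T) is a necklace (lexicographically minimal among its cyclic shifts), where bin_n(T) is the binary string 0^{n - max(T) - 1} b_0 b_1 ... b_{max(T)} with b_i = 1 iff i ∈ T. -/
/-- The binary representation `bin_n(T)` of a set `T ⊆ [0, n-1]`:
the string `0^(n - max T - 1) b_0 b_1 ⋯ b_(max T)` with `b_i = 1` iff `i ∈ T`. -/
def binRep (n : ℕ) (T : Finset ℕ) : List Bool :=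
  List.replicate (n - (T.max.getD 0) - 1) false ++
    List.ofFn (fun i : Fin ((T.max.getD 0) + 1) => decide ((i : ℕ) ∈ T))

/-- A binary string is a necklace if no cyclic shift of it is lexicographically smaller. -/
def IsNecklace (a : List Bool) : Prop := ∀ i : ℕ, ¬ List.Lex (· < ·) (a.rotate i) a

def charWord (n : ℕ) (T : Finset ℕ) : List Bool :=
  List.ofFn (fun j : Fin n => decide ((j : ℕ) ∈ T))

@[simp] lemma charWord_length (n : ℕ) (T : Finset ℕ) : (charWord n T).length = n := by
  simp [charWord]

lemma charWord_getElem (n : ℕ) (T : Finset ℕ) (j : ℕ) (h : j < (charWord n T).length) :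
    (charWord n T)[j] = decide (j ∈ T) := by
  simp [charWord]

lemma max_getD (T : Finset ℕ) (hT : T.Nonempty) : T.max.getD 0 = T.max' hT := by
  rw [← Finset.coe_max' hT]; rfl

lemma max_getD_mem (T : Finset ℕ) (hT : T.Nonempty) : T.max.getD 0 ∈ T := by
  rw [max_getD T hT]; exact T.max'_mem hT

lemma le_max_getD (T : Finset ℕ) (hT : T.Nonempty) : ∀ t ∈ T, t ≤ T.max.getD 0 := by
  intro t ht; rw [max_getD T hT]; exact Finset.le_max' T t ht

lemma binRep_eq_rotate (n : ℕ) (T : Finset ℕ) (hT : T.Nonempty) (hTn : ∀ t ∈ T, t < n) :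
    binRep n T = (charWord n T).rotate (T.max.getD 0 + 1) := by
  have hmT := max_getD_mem T hT
  have hmax := le_max_getD T hT
  obtain ⟨m, hmeq⟩ : ∃ m, T.max.getD 0 = m := ⟨_, rfl⟩
  rw [hmeq] at hmT hmax
  have hmn : m < n := hTn m hmT
  apply List.ext_getElem
  · simp [binRep, List.length_rotate, hmeq]; omega
  · intro i h1 h2
    rw [List.getElem_rotate, charWord_getElem, charWord_length]
    simp only [binRep, hmeq]
    by_cases hc : i < n - m - 1
    · rw [List.getElem_append_left (by simpa using hc)]
      simp only [List.getElem_replicate]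
      have hmod : (i + (m + 1)) % n = i + (m + 1) := Nat.mod_eq_of_lt (by omega)
      rw [hmod]
      symm; simp only [decide_eq_false_iff_not]
      intro hmem; exact absurd (hmax _ hmem) (by omega)
    · have hi : i < n := by
        have := h2; rw [List.length_rotate, charWord_length] at this; exact this
      rw [List.getElem_append_right (by simpa using hc)]
      simp only [List.getElem_ofFn, List.length_replicate]
      have hmod : (i + (m + 1)) % n = i - (n - m - 1) := by
        rcases Nat.lt_or_ge (i + (m + 1)) n with h | h
        · rw [Nat.mod_eq_of_lt h]; omega
        · rw [Nat.mod_eq_sub_mod h, Nat.mod_eq_of_lt (by omega)]; omega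
      rw [hmod]; simp


lemma cancel_mod (n i a : ℕ) (hn : 0 < n) : (a + i + (n - i % n)) % n = a % n := by
  have hdm := Nat.div_add_mod i n
  have hr : i % n < n := Nat.mod_lt _ hn
  have h2 : n * (i / n + 1) = n * (i / n) + n := by ring
  have h3 : a + i + (n - i % n) = a + n * (i / n + 1) := by omega
  rw [h3, Nat.add_comm (a) (n * (i/n+1)), Nat.mul_add_mod]

lemma shift_mem (n i : ℕ) (hn : 0 < n) (S : Finset ℕ) (hSsub : ∀ s ∈ S, s < n)
    (j : ℕ) (hj : j < n) :
    (j ∈ S.image (fun s => (s + i) % n)) ↔ ((j + (n - i % n)) % n ∈ S) := by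
  constructor
  · rintro hmem
    obtain ⟨s, hs, rfl⟩ := Finset.mem_image.1 hmem
    have : ((s + i) % n + (n - i % n)) % n = s := by
      rw [Nat.mod_add_mod, cancel_mod n i s hn, Nat.mod_eq_of_lt (hSsub s hs)]
    rwa [this]
  · intro hmem
    refine Finset.mem_image.2 ⟨_, hmem, ?_⟩
    rw [Nat.mod_add_mod, Nat.add_right_comm, cancel_mod n i j hn, Nat.mod_eq_of_lt hj]

lemma allFalse : ∀ a : List Bool, a ++ [false] ≤ false :: a → ∀ b ∈ a, b = false := by
  intro a
  induction a with
  | nil => simp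
  | cons x a' ih =>
    intro h b hb
    rcases lt_or_eq_of_le h with hlt | heq
    · have hlex : List.Lex (· < ·) (x :: (a' ++ [false])) (false :: x :: a') := hlt
      cases hlex with
      | rel hr => exact absurd hr (by simp [Bool.lt_iff])
      | cons htail =>
        -- here x = false and htail : Lex (a' ++ [false]) (x :: a') with x = false
        have hall := ih (le_of_lt htail)
        rcases List.mem_cons.1 hb with rfl | hb'
        · rfl
        · exact hall b hb'
    · simp only [List.cons_append, List.cons.injEq] at heq
      obtain ⟨rfl, heq2⟩ := heq
      have hall := ih (le_of_eq heq2)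
      rcases List.mem_cons.1 hb with rfl | hb'
      · rfl
      · exact hall b hb'

lemma split_at_true : ∀ (l : List Bool), true ∈ l →
    ∃ c v, l = List.replicate c false ++ true :: v := by
  intro l
  induction l with
  | nil => simp
  | cons x t ih =>
    intro h
    cases x with
    | true => exact ⟨0, t, rfl⟩
    | false =>
      have ht : true ∈ t := by simpa using h
      obtain ⟨c, v, rfl⟩ := ih ht
      exact ⟨c + 1, v, by simp [List.replicate_succ]⟩

lemma takeWhile_rep (c : ℕ) (l : List Bool) :
    (List.replicate c false ++ true :: l).takeWhile (fun b => b == false)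
      = List.replicate c false := by
  induction c with
  | zero => simp
  | succ c ih => simp [List.replicate_succ, ih]

lemma rot_of_rot (w : List Bool) (a b : ℕ) (hw : 0 < w.length) :
    ∃ j, w.rotate b = (w.rotate a).rotate j := by
  refine ⟨a * (w.length - 1) + b, ?_⟩
  rw [List.rotate_rotate]
  have h1 : a + (a * (w.length - 1) + b) = w.length * a + b := by
    have h2 : w.length * a = a * (w.length - 1) + a := by
      have : w.length - 1 + 1 = w.length := by omega
      calc w.length * a = a * (w.length - 1 + 1) := by rw [this, Nat.mul_comm]
        _ = a * (w.length - 1) + a := by ring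
    omega
  rw [h1, ← List.rotate_mod w (w.length * a + b), Nat.mul_add_mod, List.rotate_mod]

lemma charWord_shift (n i : ℕ) (hn : 0 < n) (S : Finset ℕ) (hSsub : ∀ s ∈ S, s < n) :
    charWord n (S.image fun s => (s + i) % n) = (charWord n S).rotate (n - i % n) := by
  apply List.ext_getElem
  · simp
  · intro j h1 h2
    rw [List.getElem_rotate, charWord_getElem, charWord_getElem, charWord_length]
    have hj : j < n := by simpa using h1
    exact decide_eq_decide.2 (shift_mem n i hn S hSsub j hj)

lemma binRep_shape (n : ℕ) (T : Finset ℕ) (h0 : 0 ∈ T) :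
    ∃ rest, binRep n T =
      List.replicate (n - T.max.getD 0 - 1) false ++ true :: rest := by
  refine ⟨List.ofFn (fun i : Fin (T.max.getD 0) => decide ((i : ℕ) + 1 ∈ T)), ?_⟩
  simp only [binRep, List.ofFn_succ, Fin.val_zero, Fin.val_succ, decide_eq_true_eq, h0]
  simp [h0]

lemma binRep_inj (n : ℕ) (hn : 0 < n) (T1 T2 : Finset ℕ) (h01 : 0 ∈ T1) (h02 : 0 ∈ T2)
    (hb1 : ∀ t ∈ T1, t < n) (hb2 : ∀ t ∈ T2, t < n) (h : binRep n T1 = binRep n T2) :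
    T1 = T2 := by
  have hT1 : T1.Nonempty := ⟨0, h01⟩
  have hT2 : T2.Nonempty := ⟨0, h02⟩
  have hm1 : T1.max.getD 0 < n := hb1 _ (max_getD_mem T1 hT1)
  have hm2 : T2.max.getD 0 < n := hb2 _ (max_getD_mem T2 hT2)
  obtain ⟨r1, e1⟩ := binRep_shape n T1 h01
  obtain ⟨r2, e2⟩ := binRep_shape n T2 h02
  have hmax_eq : T1.max.getD 0 = T2.max.getD 0 := by
    have := congrArg (fun l => (l.takeWhile (fun b => b == false)).length) (e1 ▸ e2 ▸ h)
    simp only [takeWhile_rep, List.length_replicate] at this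
    omega
  have rotate_full : ∀ (l : List Bool) (k : ℕ), k = l.length → l.rotate k = l := by
    rintro l k rfl; exact List.rotate_length l
  have hcw : charWord n T1 = charWord n T2 := by
    have g1 : (binRep n T1).rotate (n - (T1.max.getD 0 + 1)) = charWord n T1 := by
      rw [binRep_eq_rotate n T1 hT1 hb1, List.rotate_rotate]
      exact rotate_full _ _ (by simp; omega)
    have g2 : (binRep n T2).rotate (n - (T2.max.getD 0 + 1)) = charWord n T2 := by
      rw [binRep_eq_rotate n T2 hT2 hb2, List.rotate_rotate]
      exact rotate_full _ _ (by simp; omega)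
    rw [← g1, ← g2, h, hmax_eq]
  ext j
  by_cases hj : j < n
  · have g1 : (charWord n T1)[j]'(by simp [hj]) = (charWord n T2)[j]'(by simp [hj]) := by
      simp only [hcw]
    rw [charWord_getElem, charWord_getElem] at g1
    exact decide_eq_decide.1 g1
  · constructor <;> intro hmem
    · exact absurd (hb1 _ hmem) hj
    · exact absurd (hb2 _ hmem) hj

theorem stmt_18 (n : ℕ) (hn : 0 < n) (S : Finset ℕ) (hS : S.Nonempty)
    (hSsub : ∀ s ∈ S, s < n) :
    ∃! T : Finset ℕ,
      (∃ i : ℕ, i < n ∧ T = S.image fun s => (s + i) % n) ∧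
      0 ∈ T ∧ IsNecklace (binRep n T) := by
  set w := charWord n S with hw
  have hwlen : w.length = n := charWord_length n S
  have hwpos : 0 < w.length := by omega
  set R := (Finset.range n).image (fun k => w.rotate k) with hR
  have hRne : R.Nonempty := ⟨w.rotate 0, Finset.mem_image.2 ⟨0, Finset.mem_range.2 hn, rfl⟩⟩
  set r := R.min' hRne with hrdef
  have hrR : r ∈ R := R.min'_mem hRne
  have hmin : ∀ x ∈ R, r ≤ x := fun x hx => R.min'_le x hx
  obtain ⟨k, hkn, hkr⟩ : ∃ k, k < n ∧ w.rotate k = r := by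
    obtain ⟨k, hk, hkr⟩ := Finset.mem_image.1 hrR
    exact ⟨k, Finset.mem_range.1 hk, hkr⟩
  have hrlen : r.length = n := by rw [← hkr, List.length_rotate, hwlen]
  have hrot_mem : ∀ i, r.rotate i ∈ R := by
    intro i
    have h1 : r.rotate i = w.rotate ((k + i) % n) := by
      rw [← hkr, List.rotate_rotate, ← hwlen, List.rotate_mod]
    rw [h1]
    exact Finset.mem_image.2 ⟨(k + i) % n, Finset.mem_range.2 (Nat.mod_lt _ hn), rfl⟩
  have hneck_r : IsNecklace r := by
    intro i hlex
    exact absurd (hlex : r.rotate i < r) (not_lt.2 (hmin _ (hrot_mem i)))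
  have htr : true ∈ r := by
    obtain ⟨s, hs⟩ := hS
    have hsn := hSsub s hs
    have hmemw : true ∈ w := by
      rw [hw, charWord, List.mem_ofFn]
      exact ⟨⟨s, hsn⟩, by simp [hs]⟩
    rw [← hkr]; exact (List.mem_rotate).2 hmemw
  obtain ⟨a, ha⟩ : ∃ a, r = a ++ [true] := by
    obtain ⟨a, x, hax⟩ : ∃ a x, r = a ++ [x] := by
      rcases List.eq_nil_or_concat r with h0 | ⟨L, b, hLb⟩
      · exfalso; rw [h0] at hrlen; simp at hrlen; omega
      · exact ⟨L, b, by simpa [List.concat_eq_append] using hLb⟩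
    cases x with
    | true => exact ⟨a, hax⟩
    | false =>
      exfalso
      have halen : a.length = n - 1 := by rw [hax] at hrlen; simp at hrlen; omega
      have hrot : r.rotate (n - 1) = false :: a := by
        rw [List.rotate_eq_drop_append_take (by rw [hrlen]; omega), hax,
          show n - 1 = a.length from halen.symm, List.drop_left, List.take_left]
        rfl
      have hle : a ++ [false] ≤ false :: a := by
        rw [← hrot, ← hax]; exact hmin _ (hrot_mem (n - 1))
      have hall := allFalse a hle
      rw [hax] at htr
      rcases List.mem_append.1 htr with h | h
      · exact absurd (hall _ h) (by simp)
      · simp at h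
  have halen : a.length = n - 1 := by rw [ha] at hrlen; simp at hrlen; omega
  have hr_last : r[n - 1]'(by omega) = true := by
    simp only [ha]
    rw [List.getElem_append_right (by omega)]
    simp
  obtain ⟨c, v, hcv⟩ := split_at_true r htr
  have hclen : c + 1 + v.length = n := by rw [hcv] at hrlen; simp at hrlen; omega
  have hcn : c < n := by omega
  have F1 : ∀ j, j < c → ∀ (hj : j < r.length), r[j] = false := by
    intro j hjc hj
    simp only [hcv]
    rw [List.getElem_append_left (by simpa using hjc)]
    simp
  have F2 : ∀ (hc : c < r.length), r[c] = true := by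
    intro hc
    simp only [hcv]
    rw [List.getElem_append_right (by simp)]
    simp
  -- define the shift i0 and the candidate T'
  set d := (c + k) % n with hd
  set i0 := (n - d) % n with hi0def
  have hi0 : i0 < n := Nat.mod_lt _ hn
  set T' := S.image (fun s => (s + i0) % n) with hT'
  have hbnd' : ∀ t ∈ T', t < n := by
    intro t ht
    obtain ⟨s, hs, rfl⟩ := Finset.mem_image.1 ht
    exact Nat.mod_lt _ hn
  have hcwT : charWord n T' = r.rotate c := by
    rw [hT', charWord_shift n i0 hn S hSsub, ← hw]
    have h1 : r.rotate c = w.rotate d := by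
      rw [← hkr, List.rotate_rotate, hd, Nat.add_comm c k, ← hwlen, List.rotate_mod]
    rw [h1]
    by_cases hd0 : d = 0
    · have hi00 : i0 = 0 := by rw [hi0def, hd0, Nat.sub_zero, Nat.mod_self]
      rw [hi00, hd0, Nat.zero_mod, Nat.sub_zero, List.rotate_zero, ← hwlen,
        List.rotate_length]
    · have hdlt : d < n := Nat.mod_lt _ hn
      have hii : i0 = n - d := by rw [hi0def, Nat.mod_eq_of_lt (by omega)]
      rw [hii, Nat.mod_eq_of_lt (by omega)]
      congr 1
      omega
  have hchar : ∀ j, j < n → (decide (j ∈ T') = r[(j + c) % n]'(by rw [hrlen]; exact Nat.mod_lt _ hn)) := by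
    intro j hj
    rw [← charWord_getElem n T' j (by simp [hj])]
    simp only [hcwT]
    rw [List.getElem_rotate]
    simp only [hrlen]
  have h0T : 0 ∈ T' := by
    have hdec := hchar 0 hn
    simp only [show (0 + c) % n = c from by rw [Nat.zero_add]; exact Nat.mod_eq_of_lt hcn] at hdec
    simp only [F2 (by omega : c < r.length)] at hdec
    exact of_decide_eq_true hdec
  have hT'ne : T'.Nonempty := ⟨0, h0T⟩
  have hmaxT' : T'.max.getD 0 = n - 1 - c := by
    apply le_antisymm
    · have hub : ∀ t ∈ T', t ≤ n - 1 - c := by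
        intro t ht
        have htn := hbnd' t ht
        by_contra hgt
        push_neg at hgt
        have hidx : (t + c) % n = t + c - n := by
          have h1 : n ≤ t + c := by omega
          rw [Nat.mod_eq_sub_mod h1, Nat.mod_eq_of_lt (by omega)]
        have hdec := hchar t htn
        simp only [hidx] at hdec
        simp only [F1 (t + c - n) (by omega) (by omega : t + c - n < r.length)] at hdec
        simp [ht] at hdec
      exact hub _ (max_getD_mem T' hT'ne)
    · refine le_max_getD T' hT'ne _ ?_
      have hdec := hchar (n - 1 - c) (by omega)
      simp only [show (n - 1 - c + c) % n = n - 1 from by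
        rw [show n - 1 - c + c = n - 1 from by omega]; exact Nat.mod_eq_of_lt (by omega)] at hdec
      simp only [hr_last] at hdec
      exact of_decide_eq_true hdec
  have hbin : binRep n T' = r := by
    rw [binRep_eq_rotate n T' hT'ne hbnd', hcwT, List.rotate_rotate, hmaxT',
      show c + (n - 1 - c + 1) = n from by omega, ← hrlen, List.rotate_length]
  have hneckT' : IsNecklace (binRep n T') := by rw [hbin]; exact hneck_r
  refine ⟨T', ⟨⟨i0, hi0, hT'⟩, h0T, hneckT'⟩, ?_⟩
  rintro T ⟨⟨i2, hi2n, hTeq⟩, h0T2, hneckT⟩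
  have hbnd2 : ∀ t ∈ T, t < n := by
    intro t ht
    rw [hTeq] at ht
    obtain ⟨s, hs, rfl⟩ := Finset.mem_image.1 ht
    exact Nat.mod_lt _ hn
  have hT2ne : T.Nonempty := ⟨0, h0T2⟩
  have hrotT : binRep n T = w.rotate ((n - i2 % n) + (T.max.getD 0 + 1)) := by
    rw [binRep_eq_rotate n T hT2ne hbnd2, hTeq, charWord_shift n i2 hn S hSsub,
      List.rotate_rotate]
  obtain ⟨j1, hj1⟩ := rot_of_rot w ((n - i2 % n) + (T.max.getD 0 + 1)) k hwpos
  obtain ⟨j2, hj2⟩ := rot_of_rot w k ((n - i2 % n) + (T.max.getD 0 + 1)) hwpos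
  have e12 : binRep n T' = (binRep n T).rotate j1 := by rw [hbin, ← hkr, hj1, hrotT]
  have e21 : binRep n T = (binRep n T').rotate j2 := by rw [hbin, ← hkr, hrotT, hj2]
  have le1 : ¬ binRep n T' < binRep n T := by
    rw [e12]; exact hneckT j1
  have le2 : ¬ binRep n T < binRep n T' := by
    rw [e21]; exact hneckT' j2
  have heq : binRep n T = binRep n T' := le_antisymm (not_lt.1 le1) (not_lt.1 le2)
  exact binRep_inj n hn T T' h0T2 h0T hbnd2 hbnd' heq
end
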